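/- The function D defined by the recurrence D(2) = 1, D(3) = 2, and D(n) = 2 + D(⌊n/2⌋) for n ≥ 4 satisfies D(n) = ⌊log₂ n⌋ + ⌊log₂(2n/3)⌋ for all n ≥ 2. -/

import Mathlib

private lemma log_half (n : ℕ) (hn : 4 ≤ n) :
    Nat.log 2 n = Nat.log 2 (n / 2) + 1 := by
  have h := Nat.log_div_base 2 n
  have h1 : 1 ≤ Nat.log 2 n := by
    rw [Nat.one_le_iff_ne_zero, Ne, Nat.log_eq_zero_iff]; omega
  omega

private lemma log_two_thirds (n : ℕ) (hn : 4 ≤ n) :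
    Nat.log 2 (2 * n / 3) = Nat.log 2 (2 * (n / 2) / 3) + 1 := by
  set m := n / 2 with hm
  have hmn : 2 * m ≤ n ∧ n ≤ 2 * m + 1 := by omega
  have hm2 : 2 ≤ m := by omega
  have h1 : 1 ≤ 2 * m / 3 := by omega
  set k := Nat.log 2 (2 * m / 3) with hk
  have hlow : 2 ^ k ≤ 2 * m / 3 := Nat.pow_log_le_self 2 (by omega)
  have hhigh : 2 * m / 3 < 2 ^ (k + 1) := Nat.lt_pow_succ_log_self (by norm_num) _
  have hlow' : 3 * 2 ^ k ≤ 2 * m := by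
    have := Nat.div_mul_le_self (2 * m) 3
    omega
  have hhigh' : 2 * m < 2 ^ (k + 1) * 3 :=
    (Nat.div_lt_iff_lt_mul (by norm_num : 0 < 3)).mp hhigh
  refine Nat.log_eq_of_pow_le_of_lt_pow ?_ ?_
  · -- 2^(k+1) ≤ 2n/3, i.e. 3 * 2^(k+1) ≤ 2n; have n ≥ 3 * 2^k
    have : 3 * 2 ^ (k + 1) ≤ 2 * n := by
      have : 2 ^ (k + 1) = 2 * 2 ^ k := by ring
      omega
    omega
  · -- 2n/3 < 2^(k+2), from 2n ≤ 4m + 2 < 6 * 2^(k+1)... use 2m < 3*2^(k+1)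
    have h2 : 2 * n < 3 * 2 ^ (k + 1 + 1) := by
      have : 2 ^ (k + 1 + 1) = 2 * 2 ^ (k + 1) := by ring
      omega
    omega

private lemma D_eq_natlog (D : ℕ → ℕ)
    (hD2 : D 2 = 1) (hD3 : D 3 = 2)
    (hDrec : ∀ n, 4 ≤ n → D n = 2 + D (n / 2)) :
    ∀ n, 2 ≤ n → D n = Nat.log 2 n + Nat.log 2 (2 * n / 3) := by
  intro n
  induction n using Nat.strong_induction_on with
  | _ n ih =>
    intro hn
    rcases Nat.lt_or_ge n 4 with h4 | h4
    · have l1 : Nat.log 2 1 = 0 := Nat.log_one_right 2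
      have l2 : Nat.log 2 2 = 1 := Nat.log_eq_of_pow_le_of_lt_pow (by norm_num) (by norm_num)
      have l3 : Nat.log 2 3 = 1 := Nat.log_eq_of_pow_le_of_lt_pow (by norm_num) (by norm_num)
      interval_cases n
      · rw [hD2]; norm_num [l1, l2]
      · rw [hD3]; norm_num [l1, l2, l3]
    · have hrec := hDrec n h4
      have ih' := ih (n / 2) (by omega) (by omega)
      rw [hrec, ih', log_half n h4, log_two_thirds n h4]
      ring

/-- The function `D` defined by `D 2 = 1`, `D 3 = 2` and
`D n = 2 + D ⌊n/2⌋` for `n ≥ 4` satisfies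
`D n = ⌊log₂ n⌋ + ⌊log₂ (2n/3)⌋` for all `n ≥ 2`. -/
theorem ladder1_depth_formula (D : ℕ → ℕ)
    (hD2 : D 2 = 1) (hD3 : D 3 = 2)
    (hDrec : ∀ n, 4 ≤ n → D n = 2 + D (n / 2)) :
    ∀ n, 2 ≤ n →
      (D n : ℤ) = ⌊Real.logb 2 (n : ℝ)⌋ + ⌊Real.logb 2 ((2 * n : ℝ) / 3)⌋ := by
  intro n hn
  have h1 : ⌊Real.logb 2 (n : ℝ)⌋ = (Nat.log 2 n : ℤ) := by
    rw [show ((2 : ℝ)) = ((2 : ℕ) : ℝ) by norm_num,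
      Real.floor_logb_natCast (by positivity), Int.log_natCast]
  have h2 : ⌊Real.logb 2 ((2 * n : ℝ) / 3)⌋ = (Nat.log 2 (2 * n / 3) : ℤ) := by
    have hr : (1 : ℝ) ≤ (2 * n : ℝ) / 3 := by
      rw [le_div_iff₀ (by norm_num)]
      have : (2 : ℝ) ≤ (n : ℝ) := by exact_mod_cast hn
      linarith
    rw [show ((2 : ℝ)) = ((2 : ℕ) : ℝ) by norm_num,
      Real.floor_logb_natCast (by linarith)]
    push_cast
    rw [Int.log_of_one_le_right _ hr]
    congr 1
    have : ((2 * n : ℝ)) = ((2 * n : ℕ) : ℝ) := by push_cast; ring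
    rw [this, show (3 : ℝ) = ((3 : ℕ) : ℝ) by norm_num, Nat.floor_div_natCast,
      Nat.floor_natCast]
  rw [h1, h2, D_eq_natlog D hD2 hD3 hDrec n hn]
  push_cast
  ring
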